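/- Let μ be the (unique) stationary distribution of the MDP with Bernoulli treatments, let P* be the fixed point of the mean-field dynamical system, and let Y* ∈ {0,1}^n have independent coordinates with Y*_i ~ Bernoulli(P*_i). Then W_{L1}(μ, law(Y*)) ≤ n·√(L_n)·√C / (2(1−C)). -/

import Mathlib

open Finset Filter Topology

noncomputable section

namespace MRT

/-- The state space: binary outcomes for each of the `n` units. -/
abbrev State (n : ℕ) := Fin n → Bool

variable {n : ℕ}

/-- `zc Nbr y i` is `Z_i(y) = ∑_{j ∈ 𝒩_i} y_j`, the number of active neighbors of `i`. -/
def zc (Nbr : Fin n → Finset (Fin n)) (y : State n) (i : Fin n) : ℝ :=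
  ∑ j ∈ Nbr i, (if y j then (1 : ℝ) else 0)

/-- Probability that coordinate `i` is `1` at the next step, starting from state `y`,
under Bernoulli(π i) treatments. -/
def succProb (Nbr : Fin n → Finset (Fin n)) (f : Fin n → Bool → Bool → ℝ → ℝ)
    (π : Fin n → ℝ) (y : State n) (i : Fin n) : ℝ :=
  π i * f i (y i) true (zc Nbr y i) + (1 - π i) * f i (y i) false (zc Nbr y i)

/-- Transition kernel `P(π)` of the MDP with Bernoulli treatments. -/
def kernel (Nbr : Fin n → Finset (Fin n)) (f : Fin n → Bool → Bool → ℝ → ℝ)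
    (π : Fin n → ℝ) (y y' : State n) : ℝ :=
  ∏ i, if y' i then succProb Nbr f π y i else 1 - succProb Nbr f π y i

/-- One-step pushforward `ν P(π)` of a distribution `ν` under the kernel. -/
def step (Nbr : Fin n → Finset (Fin n)) (f : Fin n → Bool → Bool → ℝ → ℝ)
    (π : Fin n → ℝ) (ν : State n → ℝ) : State n → ℝ :=
  fun y' => ∑ y, ν y * kernel Nbr f π y y'

/-- `ν` is a probability distribution on `{0,1}^n`. -/
def IsDist (ν : State n → ℝ) : Prop := (∀ y, 0 ≤ ν y) ∧ ∑ y, ν y = 1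

/-- `μ` is a stationary probability distribution for the kernel. -/
def IsStationary (Nbr : Fin n → Finset (Fin n)) (f : Fin n → Bool → Bool → ℝ → ℝ)
    (π : Fin n → ℝ) (μ : State n → ℝ) : Prop :=
  IsDist μ ∧ step Nbr f π μ = μ

/-- Expectation of `g` under the (finitely supported) distribution `ν`. -/
def expect (ν : State n → ℝ) (g : State n → ℝ) : ℝ := ∑ y, ν y * g y

/-- `γ` is a coupling of `ν₁` and `ν₂`. -/
def IsCoupling (γ : State n × State n → ℝ) (ν₁ ν₂ : State n → ℝ) : Prop :=
  (∀ p, 0 ≤ γ p) ∧ (∀ x, ∑ y, γ (x, y) = ν₁ x) ∧ (∀ y, ∑ x, γ (x, y) = ν₂ y)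

/-- `∑ i |x_i - y_i|` for binary vectors. -/
def hamming (x y : State n) : ℝ := ∑ i : Fin n, (if x i = y i then (0:ℝ) else 1)

/-- The `L1`-Wasserstein distance between two distributions on `{0,1}^n`. -/
def WL1 (ν₁ ν₂ : State n → ℝ) : ℝ :=
  sInf {c | ∃ γ, IsCoupling γ ν₁ ν₂ ∧ c = ∑ p : State n × State n, γ p * hamming p.1 p.2}

/-- `∑_{j ∈ 𝒩_i} |x_j - y_j|` for binary vectors. -/
def nbrDiff (Nbr : Fin n → Finset (Fin n)) (i : Fin n) (x y : State n) : ℝ :=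
  ∑ j ∈ Nbr i, (if x j = y j then (0:ℝ) else 1)

/-- The graph-dependent Wasserstein distance `W_{d_{E,k}}`. -/
def WdE (Nbr : Fin n → Finset (Fin n)) (k : ℕ) (ν₁ ν₂ : State n → ℝ) : ℝ :=
  sInf {c | ∃ γ, IsCoupling γ ν₁ ν₂ ∧
    c = ⨆ i : Fin n,
      (∑ p : State n × State n, γ p * (nbrDiff Nbr i p.1 p.2) ^ k) ^ ((k : ℝ)⁻¹)}

/-- Multilinear extension of `f i` to probabilities `p, w ∈ [0,1]`:
`f_i(p,w,z) = a_i(z) + b_i(z) w + c_i(z) p + d_i(z) w p`. -/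
def fext (f : Fin n → Bool → Bool → ℝ → ℝ) (i : Fin n) (p w z : ℝ) : ℝ :=
  f i false false z + (f i false true z - f i false false z) * w +
    (f i true false z - f i false false z) * p +
    (f i true true z - f i false true z - f i true false z + f i false false z) * w * p

/-- `Q_i = ∑_{j ∈ 𝒩_i} P_j`. -/
def mfQ (Nbr : Fin n → Finset (Fin n)) (P : Fin n → ℝ) (i : Fin n) : ℝ := ∑ j ∈ Nbr i, P j

/-- One step of the mean-field dynamical system. -/
def mfStep (Nbr : Fin n → Finset (Fin n)) (f : Fin n → Bool → Bool → ℝ → ℝ)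
    (π : Fin n → ℝ) (P : Fin n → ℝ) : Fin n → ℝ :=
  fun i => fext f i (P i) (π i) (mfQ Nbr P i)

/-- `P` is a fixed point of the mean-field dynamical system, lying in `[0,1]^n`. -/
def IsMFFixed (Nbr : Fin n → Finset (Fin n)) (f : Fin n → Bool → Bool → ℝ → ℝ)
    (π : Fin n → ℝ) (P : Fin n → ℝ) : Prop :=
  (∀ i, P i ∈ Set.Icc (0:ℝ) 1) ∧ mfStep Nbr f π P = P

/-- Law of a vector of independent Bernoulli(P i) coordinates. -/
def prodLaw (P : Fin n → ℝ) (y : State n) : ℝ := ∏ i, if y i then P i else 1 - P i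

/-- Probability of the treatment vector `w` under independent Bernoulli(π i). -/
def wProb (π : Fin n → ℝ) (w : State n) : ℝ := ∏ i, if w i then π i else 1 - π i

/-- Conditional probability of the next state `y'` given state `y` and treatments `w`. -/
def condProb (Nbr : Fin n → Finset (Fin n)) (f : Fin n → Bool → Bool → ℝ → ℝ)
    (y w y' : State n) : ℝ :=
  ∏ i, if y' i then f i (y i) (w i) (zc Nbr y i) else 1 - f i (y i) (w i) (zc Nbr y i)

/-- Probability of the trajectory `(Y_1, …, Y_{T+1}; W_1, …, W_T)` (indexed from `0` in Lean)
of the MDP with Bernoulli treatments, with initial distribution `ν₀`. -/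
def trajProb (Nbr : Fin n → Finset (Fin n)) (f : Fin n → Bool → Bool → ℝ → ℝ)
    (π : Fin n → ℝ) (T : ℕ) (ν₀ : State n → ℝ)
    (Y : Fin (T + 1) → State n) (W : Fin T → State n) : ℝ :=
  ν₀ (Y 0) * ∏ t : Fin T, wProb π (W t) * condProb Nbr f (Y t.castSucc) (W t) (Y t.succ)

/-- The estimator `f̂_i(y,w)` computed from the trajectory (convention `0/0 = 0`,
which is Lean's division). -/
def fhat {T : ℕ} (Y : Fin (T + 1) → State n) (W : Fin T → State n)
    (i : Fin n) (y w : Bool) : ℝ :=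
  (∑ t : Fin T, if Y t.castSucc i = y ∧ W t i = w then (if Y t.succ i then (1:ℝ) else 0) else 0) /
  (∑ t : Fin T, if Y t.castSucc i = y ∧ W t i = w then (1:ℝ) else 0)

/-- The undirected-graph structure: symmetric neighborhoods without self-loops. -/
def GoodGraph (Nbr : Fin n → Finset (Fin n)) : Prop :=
  (∀ i j, i ∈ Nbr j ↔ j ∈ Nbr i) ∧ ∀ i, i ∉ Nbr i

/-- `f` takes values strictly between 0 and 1. -/
def PosF (f : Fin n → Bool → Bool → ℝ → ℝ) : Prop :=
  ∀ i y w z, 0 ≤ z → f i y w z ∈ Set.Ioo (0:ℝ) 1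

/-- The regularity assumptions: `L`-Lipschitzness in the third argument, the bound `B` on
the effect of the first argument, maximal degree `D`, and the contraction condition
`B + L·D ≤ C < 1`. -/
def Regular (Nbr : Fin n → Finset (Fin n)) (f : Fin n → Bool → Bool → ℝ → ℝ)
    (L B : ℝ) (D : ℕ) (C : ℝ) : Prop :=
  0 ≤ L ∧
  (∀ i y w z₁ z₂, 0 ≤ z₁ → 0 ≤ z₂ → |f i y w z₁ - f i y w z₂| ≤ L * |z₁ - z₂|) ∧
  (∀ i w z, 0 ≤ z → |f i true w z - f i false w z| ≤ B) ∧
  (∀ i, (Nbr i).card ≤ D) ∧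
  B + L * D ≤ C ∧ C < 1

/-- Adjacency matrix of the interference graph. -/
def adjMat (Nbr : Fin n → Finset (Fin n)) : Matrix (Fin n) (Fin n) ℝ :=
  Matrix.of fun i j => if j ∈ Nbr i then (1:ℝ) else 0


/-- Indicator of `Y_i = 1` as a real-valued function of the state. -/
def Yi (i : Fin n) (s : State n) : ℝ := if s i then 1 else 0

/-- `a_i(z) = f_i(0,0,z)`. -/
def aF (f : Fin n → Bool → Bool → ℝ → ℝ) (i : Fin n) (z : ℝ) : ℝ := f i false false z

/-- `b_i(z) = f_i(0,1,z) - f_i(0,0,z)`. -/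
def bF (f : Fin n → Bool → Bool → ℝ → ℝ) (i : Fin n) (z : ℝ) : ℝ :=
  f i false true z - f i false false z

/-- `c_i(z) = f_i(1,0,z) - f_i(0,0,z)`. -/
def cF (f : Fin n → Bool → Bool → ℝ → ℝ) (i : Fin n) (z : ℝ) : ℝ :=
  f i true false z - f i false false z

/-- `d_i(z) = f_i(1,1,z) - f_i(0,1,z) - f_i(1,0,z) + f_i(0,0,z)`. -/
def dF (f : Fin n → Bool → Bool → ℝ → ℝ) (i : Fin n) (z : ℝ) : ℝ :=
  f i true true z - f i false true z - f i true false z + f i false false z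

/-- `â_i` computed from the trajectory. -/
def ahat {T : ℕ} (Y : Fin (T + 1) → State n) (W : Fin T → State n) (i : Fin n) : ℝ :=
  fhat Y W i false false

/-- `b̂_i` computed from the trajectory. -/
def bhat {T : ℕ} (Y : Fin (T + 1) → State n) (W : Fin T → State n) (i : Fin n) : ℝ :=
  fhat Y W i false true - fhat Y W i false false

/-- `ĉ_i` computed from the trajectory. -/
def chat {T : ℕ} (Y : Fin (T + 1) → State n) (W : Fin T → State n) (i : Fin n) : ℝ :=
  fhat Y W i true false - fhat Y W i false false

/-- `d̂_i` computed from the trajectory. -/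
def dhat {T : ℕ} (Y : Fin (T + 1) → State n) (W : Fin T → State n) (i : Fin n) : ℝ :=
  fhat Y W i true true + fhat Y W i false false - fhat Y W i false true - fhat Y W i true false

/-- The plug-in estimator `τ̂_LDE(γ₁, γ₂)` of the long-term direct effect. -/
def ldeHat {T : ℕ} (Y : Fin (T + 1) → State n) (W : Fin T → State n) (γ₁ γ₂ : ℝ) : ℝ :=
  (1 / (n : ℝ)) * ∑ i : Fin n,
    ((ahat Y W i + bhat Y W i * γ₁) / (1 - chat Y W i - dhat Y W i * γ₁) -
      (ahat Y W i + bhat Y W i * γ₂) / (1 - chat Y W i - dhat Y W i * γ₂))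

/-- `P̂_i = (1/T) ∑_{t=1}^T Y_{it}`. -/
def Phat {T : ℕ} (Y : Fin (T + 1) → State n) (i : Fin n) : ℝ :=
  (∑ t : Fin T, if Y t.castSucc i then (1 : ℝ) else 0) / T

/-- The regression estimator `f̂'_i(y,w)_{δ_T}` of the derivative of `f_i` in its third
argument, computed from the trajectory (`Dr` is the degree bound `D_n`, `δ` is `δ_T`). -/
def fhatD (Nbr : Fin n → Finset (Fin n)) {T : ℕ}
    (Y : Fin (T + 1) → State n) (W : Fin T → State n)
    (i : Fin n) (y w : Bool) (Dr δ : ℝ) : ℝ :=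
  let ind : Fin T → ℝ := fun t => if Y t.castSucc i = y ∧ W t i = w then 1 else 0
  let cnt : ℝ := ∑ t, ind t
  let Ybar : ℝ := (∑ t, ind t * (if Y t.succ i then (1 : ℝ) else 0)) / cnt
  let Zbar : ℝ := (∑ t, ind t * zc Nbr (Y t.castSucc) i) / cnt
  (∑ t, ind t * ((if Y t.succ i then (1 : ℝ) else 0) - Ybar) * (zc Nbr (Y t.castSucc) i - Zbar)) /
    max (Dr * T * δ) (∑ t, ind t * (zc Nbr (Y t.castSucc) i - Zbar) ^ 2)

/-- The plug-in estimator `τ̂_LTE(π + Δv, π)/Δ = (1/n)·𝟙ᵀ(M_η − D̂A − Ŵ_κ)⁻¹ û`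
of the (rescaled) long-term total effect. -/
def lteHatOverDelta (Nbr : Fin n → Finset (Fin n)) (π v : Fin n → ℝ) {T : ℕ}
    (Y : Fin (T + 1) → State n) (W : Fin T → State n) (Dn : ℕ) (δ η κ : ℝ) : ℝ :=
  let Dh : Fin n → ℝ := fun i =>
    (1 - π i) * (1 - Phat Y i) * fhatD Nbr Y W i false false Dn δ +
      π i * (1 - Phat Y i) * fhatD Nbr Y W i false true Dn δ +
      Phat Y i * (1 - π i) * fhatD Nbr Y W i true false Dn δ +
      Phat Y i * π i * fhatD Nbr Y W i true true Dn δ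
  let ω : Fin n → ℝ := fun i => min (1 - κ) (chat Y W i + dhat Y W i * π i)
  let u : Fin n → ℝ := fun i => (bhat Y W i + dhat Y W i * Phat Y i) * v i
  let Mη : Matrix (Fin n) (Fin n) ℝ :=
    Matrix.diagonal fun i => max 1 (Dh i * Dn / (1 - η) + ω i)
  (1 / (n : ℝ)) *
    ∑ i : Fin n, ((Mη - Matrix.diagonal Dh * adjMat Nbr - Matrix.diagonal ω)⁻¹.mulVec u) i


/-! ### Auxiliary machinery for the mean-field Wasserstein bound -/

section MFAux

variable {n : ℕ}

/-- Bernoulli weight. -/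
def bern (p : ℝ) (b : Bool) : ℝ := if b then p else 1 - p

/-- Indicator of a Boolean as a real number. -/
def chi (b : Bool) : ℝ := if b then 1 else 0

lemma sum_state_prod (g : Fin n → Bool → ℝ) :
    ∑ y : State n, ∏ i, g i (y i) = ∏ i, ∑ b, g i b := by
  classical
  have h := Finset.prod_univ_sum (fun _ : Fin n => (Finset.univ : Finset Bool)) g
  rw [Fintype.piFinset_univ] at h
  rw [← h]

lemma sum_pairs (h : Fin n → Bool → Bool → ℝ) :
    ∑ x : State n, ∑ y : State n, ∏ i, h i (x i) (y i) = ∏ i, ∑ a, ∑ b, h i a b := by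
  have h1 : ∀ x : State n, ∑ y : State n, ∏ i, h i (x i) (y i) = ∏ i, ∑ b, h i (x i) b :=
    fun x => sum_state_prod (fun i b => h i (x i) b)
  rw [Finset.sum_congr rfl (fun x _ => h1 x)]
  exact sum_state_prod (fun i a => ∑ b, h i a b)

/-- Maximal coupling of two Bernoulli distributions. -/
def bcoup (p q : ℝ) : Bool → Bool → ℝ := fun a b =>
  if a then (if b then min p q else p - min p q)
  else (if b then q - min p q else min (1 - p) (1 - q))

lemma bcoup_nonneg {p q : ℝ} (hp : p ∈ Set.Icc (0:ℝ) 1) (hq : q ∈ Set.Icc (0:ℝ) 1)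
    (a b : Bool) : 0 ≤ bcoup p q a b := by
  obtain ⟨hp0, hp1⟩ := hp; obtain ⟨hq0, hq1⟩ := hq
  have h1 := min_le_left p q
  have h2 := min_le_right p q
  have h3 : (0:ℝ) ≤ min (1-p) (1-q) := le_min (by linarith) (by linarith)
  have h4 : (0:ℝ) ≤ min p q := le_min hp0 hq0
  cases a <;> cases b <;>
    simp only [bcoup, Bool.false_eq_true, if_false, if_true, reduceIte] <;> linarith

lemma min_one_sub (p q : ℝ) : min (1 - p) (1 - q) = 1 - max p q := by
  rcases le_total p q with h | h
  · rw [max_eq_right h, min_eq_right (by linarith)]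
  · rw [max_eq_left h, min_eq_left (by linarith)]

lemma bcoup_margL (p q : ℝ) (a : Bool) :
    (∑ b, bcoup p q a b) = bern p a := by
  have h := min_one_sub p q
  have h2 : min p q + max p q = p + q := min_add_max p q
  cases a <;> simp [bcoup, bern, Fintype.sum_bool] <;> linarith

lemma bcoup_margR (p q : ℝ) (b : Bool) :
    (∑ a, bcoup p q a b) = bern q b := by
  have h := min_one_sub p q
  have h2 : min p q + max p q = p + q := min_add_max p q
  cases b <;> simp [bcoup, bern, Fintype.sum_bool] <;> linarith

lemma bcoup_total (p q : ℝ) : ∑ a, ∑ b, bcoup p q a b = 1 := by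
  have h := min_one_sub p q
  have h2 : min p q + max p q = p + q := min_add_max p q
  simp [bcoup, Fintype.sum_bool]; linarith

lemma bcoup_cost (p q : ℝ) :
    ∑ a, ∑ b, bcoup p q a b * (if a = b then (0:ℝ) else 1) = |p - q| := by
  have h2 : min p q + max p q = p + q := min_add_max p q
  have h3 : |p - q| = max p q - min p q := by
    rcases le_total p q with h | h
    · rw [max_eq_right h, min_eq_left h, abs_of_nonpos (by linarith)]; ring
    · rw [max_eq_left h, min_eq_right h, abs_of_nonneg (by linarith)]
  simp [bcoup, Fintype.sum_bool, h3]; linarith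

/-! ### Pointwise facts about `fext` -/

lemma fext_bool (f : Fin n → Bool → Bool → ℝ → ℝ) (i : Fin n) (b : Bool) (w z : ℝ) :
    fext f i (chi b) w z = (1 - w) * f i b false z + w * f i b true z := by
  cases b <;> simp [fext, chi] <;> ring

lemma succProb_eq_fext (Nbr : Fin n → Finset (Fin n)) (f : Fin n → Bool → Bool → ℝ → ℝ)
    (π : Fin n → ℝ) (x : State n) (i : Fin n) :
    succProb Nbr f π x i = fext f i (chi (x i)) (π i) (zc Nbr x i) := by
  rw [fext_bool]; rw [succProb]; ring

lemma zc_nonneg (Nbr : Fin n → Finset (Fin n)) (y : State n) (i : Fin n) :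
    0 ≤ zc Nbr y i := by
  refine Finset.sum_nonneg fun j _ => ?_
  split <;> norm_num

lemma mfQ_nonneg (Nbr : Fin n → Finset (Fin n)) {P : Fin n → ℝ}
    (hP : ∀ i, P i ∈ Set.Icc (0:ℝ) 1) (i : Fin n) : 0 ≤ mfQ Nbr P i :=
  Finset.sum_nonneg fun j _ => (hP j).1

lemma fext_chi_mem {f : Fin n → Bool → Bool → ℝ → ℝ} (hf : PosF f)
    {w z : ℝ} (hw : w ∈ Set.Icc (0:ℝ) 1) (hz : 0 ≤ z) (i : Fin n) (b : Bool) :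
    fext f i (chi b) w z ∈ Set.Icc (0:ℝ) 1 := by
  obtain ⟨h0, h1⟩ := hf i b false z hz
  obtain ⟨h0', h1'⟩ := hf i b true z hz
  obtain ⟨hw0, hw1⟩ := hw
  rw [fext_bool]
  constructor
  · nlinarith
  · nlinarith

lemma fext_lip {f : Fin n → Bool → Bool → ℝ → ℝ} {L : ℝ} (hL0 : 0 ≤ L)
    (hLip : ∀ i y w z₁ z₂, 0 ≤ z₁ → 0 ≤ z₂ → |f i y w z₁ - f i y w z₂| ≤ L * |z₁ - z₂|)
    {w : ℝ} (hw : w ∈ Set.Icc (0:ℝ) 1) {z₁ z₂ : ℝ} (hz1 : 0 ≤ z₁) (hz2 : 0 ≤ z₂)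
    (i : Fin n) (b : Bool) :
    |fext f i (chi b) w z₁ - fext f i (chi b) w z₂| ≤ L * |z₁ - z₂| := by
  obtain ⟨hw0, hw1⟩ := hw
  rw [fext_bool, fext_bool]
  have e : (1 - w) * f i b false z₁ + w * f i b true z₁ -
      ((1 - w) * f i b false z₂ + w * f i b true z₂) =
      (1 - w) * (f i b false z₁ - f i b false z₂) + w * (f i b true z₁ - f i b true z₂) := by
    ring
  rw [e]
  calc |(1 - w) * (f i b false z₁ - f i b false z₂) + w * (f i b true z₁ - f i b true z₂)|
      ≤ |(1 - w) * (f i b false z₁ - f i b false z₂)| + |w * (f i b true z₁ - f i b true z₂)| :=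
        abs_add_le _ _
    _ = (1 - w) * |f i b false z₁ - f i b false z₂| + w * |f i b true z₁ - f i b true z₂| := by
        rw [abs_mul, abs_mul, abs_of_nonneg (by linarith), abs_of_nonneg hw0]
    _ ≤ (1 - w) * (L * |z₁ - z₂|) + w * (L * |z₁ - z₂|) := by
        refine add_le_add ?_ ?_
        · exact mul_le_mul_of_nonneg_left (hLip i b false z₁ z₂ hz1 hz2) (by linarith)
        · exact mul_le_mul_of_nonneg_left (hLip i b true z₁ z₂ hz1 hz2) hw0
    _ = L * |z₁ - z₂| := by ring

lemma fext_bdiff {f : Fin n → Bool → Bool → ℝ → ℝ} {B : ℝ}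
    (hB : ∀ i w z, 0 ≤ z → |f i true w z - f i false w z| ≤ B)
    {w : ℝ} (hw : w ∈ Set.Icc (0:ℝ) 1) {z : ℝ} (hz : 0 ≤ z) (i : Fin n) (a b : Bool) :
    |fext f i (chi a) w z - fext f i (chi b) w z| ≤ B * (if a = b then (0:ℝ) else 1) := by
  obtain ⟨hw0, hw1⟩ := hw
  have key : |fext f i (chi true) w z - fext f i (chi false) w z| ≤ B := by
    rw [fext_bool, fext_bool]
    have e : (1 - w) * f i true false z + w * f i true true z -
        ((1 - w) * f i false false z + w * f i false true z) =
        (1 - w) * (f i true false z - f i false false z) +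
          w * (f i true true z - f i false true z) := by ring
    rw [e]
    calc _ ≤ |(1 - w) * (f i true false z - f i false false z)| +
          |w * (f i true true z - f i false true z)| := abs_add_le _ _
      _ = (1 - w) * |f i true false z - f i false false z| +
          w * |f i true true z - f i false true z| := by
          rw [abs_mul, abs_mul, abs_of_nonneg (by linarith), abs_of_nonneg hw0]
      _ ≤ (1 - w) * B + w * B := by
          refine add_le_add ?_ ?_
          · exact mul_le_mul_of_nonneg_left (hB i false z hz) (by linarith)
          · exact mul_le_mul_of_nonneg_left (hB i true z hz) hw0
      _ = B := by ring
  cases a <;> cases b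
  · simp
  · have e : (if (false = true : Prop) then (0:ℝ) else 1) = 1 := by norm_num
    rw [e, mul_one, abs_sub_comm]
    exact key
  · have e : (if (true = false : Prop) then (0:ℝ) else 1) = 1 := by norm_num
    rw [e, mul_one]
    exact key
  · simp

lemma fext_linear (f : Fin n → Bool → Bool → ℝ → ℝ) (i : Fin n) (w z q : ℝ) :
    q * fext f i 1 w z + (1 - q) * fext f i 0 w z = fext f i q w z := by
  simp only [fext]; ring

/-! ### Facts about `prodLaw` -/

lemma prodLaw_eq_bern (P : Fin n → ℝ) (y : State n) :
    prodLaw P y = ∏ i, bern (P i) (y i) := rfl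

lemma prodLaw_nonneg {P : Fin n → ℝ} (hP : ∀ i, P i ∈ Set.Icc (0:ℝ) 1) (y : State n) :
    0 ≤ prodLaw P y := by
  refine Finset.prod_nonneg fun i _ => ?_
  cases h : y i <;> simp [h]
  · linarith [(hP i).2]
  · exact (hP i).1

lemma sum_prodLaw {P : Fin n → ℝ} : ∑ y : State n, prodLaw P y = 1 := by
  calc ∑ y : State n, prodLaw P y = ∑ y : State n, ∏ i, bern (P i) (y i) := rfl
    _ = ∏ i, ∑ b, bern (P i) b := sum_state_prod _
    _ = 1 := by simp [bern, Fintype.sum_bool]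

lemma expect_dev {P : Fin n → ℝ} (j k : Fin n) :
    ∑ y : State n, prodLaw P y * ((chi (y j) - P j) * (chi (y k) - P k))
      = if j = k then P j * (1 - P j) else 0 := by
  classical
  have key : ∀ y : State n, prodLaw P y * ((chi (y j) - P j) * (chi (y k) - P k)) =
      ∏ i, (bern (P i) (y i) *
        ((if i = j then chi (y i) - P j else 1) * (if i = k then chi (y i) - P k else 1))) := by
    intro y
    rw [Finset.prod_mul_distrib, Finset.prod_mul_distrib, Finset.prod_ite_eq',
      Finset.prod_ite_eq']
    simp [prodLaw_eq_bern]
  rw [Finset.sum_congr rfl fun y _ => key y,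
    sum_state_prod (fun i b => bern (P i) b *
      ((if i = j then chi b - P j else 1) * (if i = k then chi b - P k else 1)))]
  by_cases hjk : j = k
  · subst hjk
    rw [if_pos rfl, Finset.prod_eq_single j]
    · simp [bern, chi, Fintype.sum_bool]; ring
    · intro i _ hij
      simp [bern, chi, Fintype.sum_bool, hij]
    · simp
  · rw [if_neg hjk]
    refine Finset.prod_eq_zero (Finset.mem_univ j) ?_
    simp [bern, chi, Fintype.sum_bool, hjk]
    ring

lemma expect_sq {P : Fin n → ℝ} (Nbr : Fin n → Finset (Fin n)) (i : Fin n) :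
    ∑ y : State n, prodLaw P y * (zc Nbr y i - mfQ Nbr P i)^2
      = ∑ j ∈ Nbr i, P j * (1 - P j) := by
  classical
  have hzq : ∀ y : State n, zc Nbr y i - mfQ Nbr P i = ∑ j ∈ Nbr i, (chi (y j) - P j) := by
    intro y
    rw [zc, mfQ, ← Finset.sum_sub_distrib]
    rfl
  calc ∑ y : State n, prodLaw P y * (zc Nbr y i - mfQ Nbr P i)^2
      = ∑ y : State n, ∑ j ∈ Nbr i, ∑ k ∈ Nbr i,
          prodLaw P y * ((chi (y j) - P j) * (chi (y k) - P k)) := by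
        refine Finset.sum_congr rfl fun y _ => ?_
        rw [hzq y, sq, Finset.sum_mul_sum, Finset.mul_sum]
        exact Finset.sum_congr rfl fun j _ => by rw [Finset.mul_sum]
    _ = ∑ j ∈ Nbr i, ∑ k ∈ Nbr i, ∑ y : State n,
          prodLaw P y * ((chi (y j) - P j) * (chi (y k) - P k)) := by
        rw [Finset.sum_comm]
        exact Finset.sum_congr rfl fun j _ => Finset.sum_comm
    _ = ∑ j ∈ Nbr i, ∑ k ∈ Nbr i, (if j = k then P j * (1 - P j) else 0) := by
        exact Finset.sum_congr rfl fun j _ => Finset.sum_congr rfl fun k _ => expect_dev j k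
    _ = ∑ j ∈ Nbr i, P j * (1 - P j) := by
        refine Finset.sum_congr rfl fun j hj => ?_
        rw [Finset.sum_ite_eq (Nbr i) j (fun k => P j * (1 - P j)), if_pos hj]

lemma abs_dev_bound {P : Fin n → ℝ} (hP : ∀ i, P i ∈ Set.Icc (0:ℝ) 1)
    (Nbr : Fin n → Finset (Fin n)) {D : ℕ} (i : Fin n) (hD : (Nbr i).card ≤ D) :
    ∑ y : State n, prodLaw P y * |zc Nbr y i - mfQ Nbr P i| ≤ Real.sqrt D / 2 := by
  classical
  set T := ∑ y : State n, prodLaw P y * |zc Nbr y i - mfQ Nbr P i| with hT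
  have hT0 : 0 ≤ T :=
    Finset.sum_nonneg fun y _ => mul_nonneg (prodLaw_nonneg hP y) (abs_nonneg _)
  have hCS : T^2 ≤ (∑ y : State n, prodLaw P y) *
      ∑ y : State n, prodLaw P y * (zc Nbr y i - mfQ Nbr P i)^2 := by
    have h := Finset.sum_mul_sq_le_sq_mul_sq Finset.univ
      (fun y : State n => Real.sqrt (prodLaw P y))
      (fun y : State n => Real.sqrt (prodLaw P y) * |zc Nbr y i - mfQ Nbr P i|)
    have e1 : ∀ y : State n, Real.sqrt (prodLaw P y) *
        (Real.sqrt (prodLaw P y) * |zc Nbr y i - mfQ Nbr P i|) =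
        prodLaw P y * |zc Nbr y i - mfQ Nbr P i| := by
      intro y
      rw [← mul_assoc, Real.mul_self_sqrt (prodLaw_nonneg hP y)]
    have e2 : ∀ y : State n, (Real.sqrt (prodLaw P y))^2 = prodLaw P y := fun y =>
      Real.sq_sqrt (prodLaw_nonneg hP y)
    have e3 : ∀ y : State n, (Real.sqrt (prodLaw P y) * |zc Nbr y i - mfQ Nbr P i|)^2 =
        prodLaw P y * (zc Nbr y i - mfQ Nbr P i)^2 := by
      intro y
      rw [mul_pow, Real.sq_sqrt (prodLaw_nonneg hP y), sq_abs]
    calc T^2 = (∑ y : State n, Real.sqrt (prodLaw P y) *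
          (Real.sqrt (prodLaw P y) * |zc Nbr y i - mfQ Nbr P i|))^2 := by
          rw [Finset.sum_congr rfl fun y _ => e1 y]
      _ ≤ (∑ y : State n, (Real.sqrt (prodLaw P y))^2) *
          ∑ y : State n, (Real.sqrt (prodLaw P y) * |zc Nbr y i - mfQ Nbr P i|)^2 := h
      _ = _ := by
          rw [Finset.sum_congr rfl fun y _ => e2 y, Finset.sum_congr rfl fun y _ => e3 y]
  rw [sum_prodLaw, one_mul, expect_sq] at hCS
  have hvar : ∑ j ∈ Nbr i, P j * (1 - P j) ≤ (D:ℝ) / 4 := by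
    calc ∑ j ∈ Nbr i, P j * (1 - P j) ≤ ∑ j ∈ Nbr i, (1/4 : ℝ) := by
          refine Finset.sum_le_sum fun j _ => ?_
          obtain ⟨h0, h1⟩ := hP j
          nlinarith [sq_nonneg (P j - 1/2)]
      _ = ((Nbr i).card : ℝ) * (1/4) := by rw [Finset.sum_const, nsmul_eq_mul]
      _ ≤ (D:ℝ) / 4 := by
          have : ((Nbr i).card : ℝ) ≤ (D : ℝ) := Nat.cast_le.mpr hD
          linarith
  have hsq : T^2 ≤ (Real.sqrt D / 2)^2 := by
    have : (Real.sqrt D / 2)^2 = (D:ℝ)/4 := by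
      rw [div_pow, Real.sq_sqrt (Nat.cast_nonneg D)]
      norm_num
    rw [this]
    linarith
  calc T ≤ Real.sqrt (T^2) := by rw [Real.sqrt_sq hT0]
    _ ≤ Real.sqrt ((Real.sqrt D / 2)^2) := Real.sqrt_le_sqrt hsq
    _ = Real.sqrt D / 2 := Real.sqrt_sq (by positivity)

lemma sum_nbrDiff_le {Nbr : Fin n → Finset (Fin n)} (hG : GoodGraph Nbr) {D : ℕ}
    (hD : ∀ i, (Nbr i).card ≤ D) (x y : State n) :
    ∑ i, nbrDiff Nbr i x y ≤ (D:ℝ) * hamming x y := by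
  classical
  have hF0 : ∀ j : Fin n, (0:ℝ) ≤ (if x j = y j then (0:ℝ) else 1) := by
    intro j; split <;> norm_num
  have h1 : ∑ i, nbrDiff Nbr i x y
      = ∑ j : Fin n, ((Nbr j).card : ℝ) * (if x j = y j then (0:ℝ) else 1) := by
    calc ∑ i, nbrDiff Nbr i x y
        = ∑ i : Fin n, ∑ j : Fin n, if j ∈ Nbr i then (if x j = y j then (0:ℝ) else 1) else 0 := by
          refine Finset.sum_congr rfl fun i _ => ?_
          rw [Finset.sum_ite_mem, Finset.univ_inter]
          rfl
      _ = ∑ j : Fin n, ∑ i : Fin n, if j ∈ Nbr i then (if x j = y j then (0:ℝ) else 1) else 0 :=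
          Finset.sum_comm
      _ = ∑ j : Fin n, ∑ i : Fin n, if i ∈ Nbr j then (if x j = y j then (0:ℝ) else 1) else 0 := by
          refine Finset.sum_congr rfl fun j _ => Finset.sum_congr rfl fun i _ => ?_
          by_cases h : j ∈ Nbr i
          · rw [if_pos h, if_pos ((hG.1 j i).mp h)]
          · rw [if_neg h, if_neg (fun h' => h ((hG.1 j i).mpr h'))]
      _ = ∑ j : Fin n, ((Nbr j).card : ℝ) * (if x j = y j then (0:ℝ) else 1) := by
          refine Finset.sum_congr rfl fun j _ => ?_
          rw [Finset.sum_ite_mem, Finset.univ_inter, Finset.sum_const, nsmul_eq_mul]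
  rw [h1, hamming, Finset.mul_sum]
  refine Finset.sum_le_sum fun j _ => ?_
  exact mul_le_mul_of_nonneg_right (Nat.cast_le.mpr (hD j)) (hF0 j)

lemma pair_cost (m : Fin n → Bool → Bool → ℝ) (hm : ∀ i, ∑ a, ∑ b, m i a b = 1) :
    ∑ x' : State n, ∑ y' : State n, (∏ i, m i (x' i) (y' i)) * hamming x' y'
      = ∑ i, ∑ a, ∑ b, m i a b * (if a = b then (0:ℝ) else 1) := by
  classical
  have h1 : ∀ (x' y' : State n), (∏ i, m i (x' i) (y' i)) * hamming x' y'
      = ∑ j, ∏ i, (m i (x' i) (y' i) *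
        (if i = j then (if x' i = y' i then (0:ℝ) else 1) else 1)) := by
    intro x' y'
    rw [hamming, Finset.mul_sum]
    refine Finset.sum_congr rfl fun j _ => ?_
    rw [Finset.prod_mul_distrib, Finset.prod_ite_eq']
    simp
  calc ∑ x' : State n, ∑ y' : State n, (∏ i, m i (x' i) (y' i)) * hamming x' y'
      = ∑ x' : State n, ∑ y' : State n, ∑ j, ∏ i, (m i (x' i) (y' i) *
          (if i = j then (if x' i = y' i then (0:ℝ) else 1) else 1)) := by
        exact Finset.sum_congr rfl fun x' _ => Finset.sum_congr rfl fun y' _ => h1 x' y'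
    _ = ∑ j, ∑ x' : State n, ∑ y' : State n, ∏ i, (m i (x' i) (y' i) *
          (if i = j then (if x' i = y' i then (0:ℝ) else 1) else 1)) := by
        exact (Finset.sum_congr rfl fun x' _ => Finset.sum_comm).trans Finset.sum_comm
    _ = ∑ j, ∏ i, ∑ a, ∑ b, (m i a b * (if i = j then (if a = b then (0:ℝ) else 1) else 1)) := by
        exact Finset.sum_congr rfl fun j _ =>
          sum_pairs (fun i a b => m i a b * (if i = j then (if a = b then (0:ℝ) else 1) else 1))
    _ = ∑ j, ∑ a, ∑ b, m j a b * (if a = b then (0:ℝ) else 1) := by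
        refine Finset.sum_congr rfl fun j _ => ?_
        rw [Finset.prod_eq_single j]
        · simp
        · intro i _ hij
          have h := hm i
          simp only [Fintype.sum_bool] at h
          simp only [if_neg hij, mul_one]
          simp only [Fintype.sum_bool]
          linarith
        · simp

end MFAux

lemma sum_swap4 {α β γ' δ : Type*} [Fintype α] [Fintype β] [Fintype γ'] [Fintype δ]
    (F : α → β → γ' → δ → ℝ) :
    ∑ a, ∑ b, ∑ c, ∑ d, F a b c d = ∑ c, ∑ d, ∑ a, ∑ b, F a b c d := by
  calc ∑ a, ∑ b, ∑ c, ∑ d, F a b c d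
      = ∑ a, ∑ c, ∑ b, ∑ d, F a b c d :=
        Finset.sum_congr rfl fun a _ => Finset.sum_comm
    _ = ∑ c, ∑ a, ∑ b, ∑ d, F a b c d := Finset.sum_comm
    _ = ∑ c, ∑ a, ∑ d, ∑ b, F a b c d :=
        Finset.sum_congr rfl fun c _ => Finset.sum_congr rfl fun a _ => Finset.sum_comm
    _ = ∑ c, ∑ d, ∑ a, ∑ b, F a b c d :=
        Finset.sum_congr rfl fun c _ => Finset.sum_comm

lemma abs_zc_sub_zc {Nbr : Fin n → Finset (Fin n)} (x y : State n) (i : Fin n) :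
    |zc Nbr x i - zc Nbr y i| ≤ nbrDiff Nbr i x y := by
  rw [zc, zc, ← Finset.sum_sub_distrib, nbrDiff]
  refine (Finset.abs_sum_le_sum_abs _ _).trans (Finset.sum_le_sum fun j _ => ?_)
  by_cases h : x j = y j
  · rw [h, if_pos rfl, sub_self, abs_zero]
  · rw [if_neg h]
    cases hx : x j <;> cases hy : y j <;> simp_all <;> norm_num

lemma hamming_nonneg (x y : State n) : 0 ≤ hamming x y :=
  Finset.sum_nonneg fun j _ => by split <;> norm_num

lemma pointwise_bound {Nbr : Fin n → Finset (Fin n)} {f : Fin n → Bool → Bool → ℝ → ℝ}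
    {π : Fin n → ℝ} {L B C : ℝ} {D : ℕ}
    (hG : GoodGraph Nbr)
    (hL0 : 0 ≤ L)
    (hLip : ∀ i y w z₁ z₂, 0 ≤ z₁ → 0 ≤ z₂ → |f i y w z₁ - f i y w z₂| ≤ L * |z₁ - z₂|)
    (hB : ∀ i w z, 0 ≤ z → |f i true w z - f i false w z| ≤ B)
    (hD : ∀ i, (Nbr i).card ≤ D)
    (hC : B + L * D ≤ C)
    (hπ01 : ∀ i, π i ∈ Set.Icc (0:ℝ) 1)
    {P : Fin n → ℝ} (hP1 : ∀ i, P i ∈ Set.Icc (0:ℝ) 1)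
    (x y : State n) :
    ∑ i, |succProb Nbr f π x i - fext f i (chi (y i)) (π i) (mfQ Nbr P i)| ≤
      C * hamming x y + L * ∑ i, |zc Nbr y i - mfQ Nbr P i| := by
  have per : ∀ i, |succProb Nbr f π x i - fext f i (chi (y i)) (π i) (mfQ Nbr P i)| ≤
      B * (if x i = y i then (0:ℝ) else 1) + L * nbrDiff Nbr i x y +
        L * |zc Nbr y i - mfQ Nbr P i| := by
    intro i
    rw [succProb_eq_fext]
    have tri : |fext f i (chi (x i)) (π i) (zc Nbr x i) -
        fext f i (chi (y i)) (π i) (mfQ Nbr P i)| ≤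
        |fext f i (chi (x i)) (π i) (zc Nbr x i) - fext f i (chi (y i)) (π i) (zc Nbr x i)| +
        |fext f i (chi (y i)) (π i) (zc Nbr x i) - fext f i (chi (y i)) (π i) (zc Nbr y i)| +
        |fext f i (chi (y i)) (π i) (zc Nbr y i) - fext f i (chi (y i)) (π i) (mfQ Nbr P i)| := by
      calc _ ≤ |fext f i (chi (x i)) (π i) (zc Nbr x i) -
            fext f i (chi (y i)) (π i) (zc Nbr y i)| +
            |fext f i (chi (y i)) (π i) (zc Nbr y i) -
              fext f i (chi (y i)) (π i) (mfQ Nbr P i)| := abs_sub_le _ _ _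
        _ ≤ _ := by
            refine add_le_add (abs_sub_le _ _ _) le_rfl
    refine tri.trans ?_
    refine add_le_add (add_le_add ?_ ?_) ?_
    · exact fext_bdiff hB (hπ01 i) (zc_nonneg Nbr x i) i (x i) (y i)
    · refine (fext_lip hL0 hLip (hπ01 i) (zc_nonneg Nbr x i) (zc_nonneg Nbr y i) i (y i)).trans ?_
      exact mul_le_mul_of_nonneg_left (abs_zc_sub_zc x y i) hL0
    · exact fext_lip hL0 hLip (hπ01 i) (zc_nonneg Nbr y i) (mfQ_nonneg Nbr hP1 i) i (y i)
  calc ∑ i, |succProb Nbr f π x i - fext f i (chi (y i)) (π i) (mfQ Nbr P i)|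
      ≤ ∑ i, (B * (if x i = y i then (0:ℝ) else 1) + L * nbrDiff Nbr i x y +
          L * |zc Nbr y i - mfQ Nbr P i|) := Finset.sum_le_sum fun i _ => per i
    _ = B * hamming x y + L * ∑ i, nbrDiff Nbr i x y +
          L * ∑ i, |zc Nbr y i - mfQ Nbr P i| := by
        rw [Finset.sum_add_distrib, Finset.sum_add_distrib, hamming, Finset.mul_sum,
          Finset.mul_sum, Finset.mul_sum]
    _ ≤ B * hamming x y + L * ((D:ℝ) * hamming x y) +
          L * ∑ i, |zc Nbr y i - mfQ Nbr P i| := by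
        refine add_le_add (add_le_add le_rfl ?_) le_rfl
        exact mul_le_mul_of_nonneg_left (sum_nbrDiff_le hG hD x y) hL0
    _ ≤ C * hamming x y + L * ∑ i, |zc Nbr y i - mfQ Nbr P i| := by
        have hham := hamming_nonneg x y
        nlinarith [mul_le_mul_of_nonneg_right hC hham]

lemma coupling_step {Nbr : Fin n → Finset (Fin n)} {f : Fin n → Bool → Bool → ℝ → ℝ}
    {π : Fin n → ℝ} {L B C : ℝ} {D : ℕ}
    (hG : GoodGraph Nbr) (hf : PosF f) (hπ : ∀ i, π i ∈ Set.Ioo (0:ℝ) 1)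
    (hReg : Regular Nbr f L B D C)
    {μ : State n → ℝ} (hμ : IsStationary Nbr f π μ)
    {P : Fin n → ℝ} (hP : IsMFFixed Nbr f π P)
    (γ : State n × State n → ℝ) (hγ : IsCoupling γ μ (prodLaw P)) :
    ∃ γ' : State n × State n → ℝ, IsCoupling γ' μ (prodLaw P) ∧
      ∑ p : State n × State n, γ' p * hamming p.1 p.2 ≤
        C * (∑ p : State n × State n, γ p * hamming p.1 p.2) +
        L * ∑ i, ∑ y : State n, prodLaw P y * |zc Nbr y i - mfQ Nbr P i| := by
  classical
  obtain ⟨hL0, hLip, hB, hD, hC, hC1⟩ := hReg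
  obtain ⟨hγ0, hγ1, hγ2⟩ := hγ
  have hπ01 : ∀ i, π i ∈ Set.Icc (0:ℝ) 1 := fun i => ⟨(hπ i).1.le, (hπ i).2.le⟩
  set pf : State n → Fin n → ℝ := fun x i => succProb Nbr f π x i with hpf
  set qf : State n → Fin n → ℝ := fun y i => fext f i (chi (y i)) (π i) (mfQ Nbr P i) with hqf
  have hp01 : ∀ x i, pf x i ∈ Set.Icc (0:ℝ) 1 := by
    intro x i
    have : pf x i = fext f i (chi (x i)) (π i) (zc Nbr x i) := succProb_eq_fext Nbr f π x i
    rw [this]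
    exact fext_chi_mem hf (hπ01 i) (zc_nonneg Nbr x i) i (x i)
  have hq01 : ∀ y i, qf y i ∈ Set.Icc (0:ℝ) 1 := fun y i =>
    fext_chi_mem hf (hπ01 i) (mfQ_nonneg Nbr hP.1 i) i (y i)
  refine ⟨fun p => ∑ x : State n, ∑ y : State n, γ (x, y) *
      ∏ i, bcoup (pf x i) (qf y i) (p.1 i) (p.2 i), ⟨?_, ?_, ?_⟩, ?_⟩
  · -- nonnegativity
    intro p
    refine Finset.sum_nonneg fun x _ => Finset.sum_nonneg fun y _ => ?_
    exact mul_nonneg (hγ0 (x, y)) (Finset.prod_nonneg fun i _ =>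
      bcoup_nonneg (hp01 x i) (hq01 y i) _ _)
  · -- first marginal
    intro x'
    have swap : ∑ y' : State n, ∑ x : State n, ∑ y : State n, γ (x, y) *
          ∏ i, bcoup (pf x i) (qf y i) (x' i) (y' i) =
        ∑ x : State n, ∑ y : State n, γ (x, y) *
          ∑ y' : State n, ∏ i, bcoup (pf x i) (qf y i) (x' i) (y' i) := by
      rw [Finset.sum_comm]
      refine Finset.sum_congr rfl fun x _ => ?_
      rw [Finset.sum_comm]
      exact Finset.sum_congr rfl fun y _ => (Finset.mul_sum _ _ _).symm
    have inner : ∀ x y : State n,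
        (∑ y' : State n, ∏ i, bcoup (pf x i) (qf y i) (x' i) (y' i)) =
          kernel Nbr f π x x' := by
      intro x y
      rw [sum_state_prod (fun i b => bcoup (pf x i) (qf y i) (x' i) b), kernel]
      refine Finset.prod_congr rfl fun i _ => ?_
      rw [bcoup_margL]
      cases h : x' i <;> simp [bern, h] <;> rfl
    calc ∑ y' : State n, ∑ x : State n, ∑ y : State n, γ (x, y) *
          ∏ i, bcoup (pf x i) (qf y i) (x' i) (y' i)
        = ∑ x : State n, ∑ y : State n, γ (x, y) *
            ∑ y' : State n, ∏ i, bcoup (pf x i) (qf y i) (x' i) (y' i) := swap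
      _ = ∑ x : State n, (∑ y : State n, γ (x, y)) * kernel Nbr f π x x' := by
          refine Finset.sum_congr rfl fun x _ => ?_
          rw [Finset.sum_mul]
          exact Finset.sum_congr rfl fun y _ => by rw [inner x y]
      _ = ∑ x : State n, μ x * kernel Nbr f π x x' := by
          exact Finset.sum_congr rfl fun x _ => by rw [hγ1 x]
      _ = step Nbr f π μ x' := rfl
      _ = μ x' := by rw [hμ.2]
  · -- second marginal
    intro y'
    have swap : ∑ x' : State n, ∑ x : State n, ∑ y : State n, γ (x, y) *
          ∏ i, bcoup (pf x i) (qf y i) (x' i) (y' i) =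
        ∑ x : State n, ∑ y : State n, γ (x, y) *
          ∑ x' : State n, ∏ i, bcoup (pf x i) (qf y i) (x' i) (y' i) := by
      rw [Finset.sum_comm]
      refine Finset.sum_congr rfl fun x _ => ?_
      rw [Finset.sum_comm]
      exact Finset.sum_congr rfl fun y _ => (Finset.mul_sum _ _ _).symm
    have inner : ∀ x y : State n,
        (∑ x' : State n, ∏ i, bcoup (pf x i) (qf y i) (x' i) (y' i)) =
          ∏ i, bern (qf y i) (y' i) := by
      intro x y
      rw [sum_state_prod (fun i a => bcoup (pf x i) (qf y i) a (y' i))]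
      exact Finset.prod_congr rfl fun i _ => bcoup_margR _ _ _
    have key : ∑ y : State n, prodLaw P y * ∏ i, bern (qf y i) (y' i) = prodLaw P y' := by
      have e : ∀ y : State n, prodLaw P y * ∏ i, bern (qf y i) (y' i) =
          ∏ i, (bern (P i) (y i) *
            bern (fext f i (chi (y i)) (π i) (mfQ Nbr P i)) (y' i)) := by
        intro y
        rw [prodLaw_eq_bern, ← Finset.prod_mul_distrib]
      rw [Finset.sum_congr rfl fun y _ => e y,
        sum_state_prod (fun i b => bern (P i) b *
          bern (fext f i (chi b) (π i) (mfQ Nbr P i)) (y' i)),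
        prodLaw_eq_bern]
      refine Finset.prod_congr rfl fun i _ => ?_
      have hfix : fext f i (P i) (π i) (mfQ Nbr P i) = P i := congrFun hP.2 i
      have key2 : P i * fext f i 1 (π i) (mfQ Nbr P i) +
          (1 - P i) * fext f i 0 (π i) (mfQ Nbr P i) = P i :=
        (fext_linear f i (π i) (mfQ Nbr P i) (P i)).trans hfix
      have hqt : chi true = (1:ℝ) := by norm_num [chi]
      have hqfz : chi false = (0:ℝ) := by norm_num [chi]
      rw [Fintype.sum_bool, hqt, hqfz]
      cases hy : y' i
      · simp only [bern, if_true, if_false, Bool.false_eq_true, reduceIte]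
        linarith
      · simp only [bern, if_true, if_false, Bool.false_eq_true, reduceIte]
        linarith
    calc ∑ x' : State n, ∑ x : State n, ∑ y : State n, γ (x, y) *
          ∏ i, bcoup (pf x i) (qf y i) (x' i) (y' i)
        = ∑ x : State n, ∑ y : State n, γ (x, y) *
            ∑ x' : State n, ∏ i, bcoup (pf x i) (qf y i) (x' i) (y' i) := swap
      _ = ∑ x : State n, ∑ y : State n, γ (x, y) * ∏ i, bern (qf y i) (y' i) := by
          exact Finset.sum_congr rfl fun x _ => Finset.sum_congr rfl fun y _ => by
            rw [inner x y]
      _ = ∑ y : State n, (∑ x : State n, γ (x, y)) * ∏ i, bern (qf y i) (y' i) := by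
          rw [Finset.sum_comm]
          exact Finset.sum_congr rfl fun y _ => (Finset.sum_mul _ _ _).symm
      _ = ∑ y : State n, prodLaw P y * ∏ i, bern (qf y i) (y' i) := by
          exact Finset.sum_congr rfl fun y _ => by rw [hγ2 y]
      _ = prodLaw P y' := key
  · -- cost bound
    have hcost : ∑ p : State n × State n, (∑ x : State n, ∑ y : State n, γ (x, y) *
          ∏ i, bcoup (pf x i) (qf y i) (p.1 i) (p.2 i)) * hamming p.1 p.2 =
        ∑ x : State n, ∑ y : State n, γ (x, y) * ∑ i, |pf x i - qf y i| := by
      rw [Fintype.sum_prod_type]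
      calc ∑ x' : State n, ∑ y' : State n, (∑ x : State n, ∑ y : State n, γ (x, y) *
            ∏ i, bcoup (pf x i) (qf y i) (x' i) (y' i)) * hamming x' y'
          = ∑ x' : State n, ∑ y' : State n, ∑ x : State n, ∑ y : State n, γ (x, y) *
              ((∏ i, bcoup (pf x i) (qf y i) (x' i) (y' i)) * hamming x' y') := by
            refine Finset.sum_congr rfl fun x' _ => Finset.sum_congr rfl fun y' _ => ?_
            rw [Finset.sum_mul]
            refine Finset.sum_congr rfl fun x _ => ?_
            rw [Finset.sum_mul]
            exact Finset.sum_congr rfl fun y _ => by ring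
        _ = ∑ x : State n, ∑ y : State n, ∑ x' : State n, ∑ y' : State n, γ (x, y) *
              ((∏ i, bcoup (pf x i) (qf y i) (x' i) (y' i)) * hamming x' y') :=
            sum_swap4 _
        _ = ∑ x : State n, ∑ y : State n, γ (x, y) * ∑ i, |pf x i - qf y i| := by
            refine Finset.sum_congr rfl fun x _ => Finset.sum_congr rfl fun y _ => ?_
            have e1 : ∑ x' : State n, ∑ y' : State n, γ (x, y) *
                ((∏ i, bcoup (pf x i) (qf y i) (x' i) (y' i)) * hamming x' y') =
                γ (x, y) * ∑ x' : State n, ∑ y' : State n,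
                  (∏ i, bcoup (pf x i) (qf y i) (x' i) (y' i)) * hamming x' y' := by
              rw [Finset.mul_sum]
              exact Finset.sum_congr rfl fun x' _ => (Finset.mul_sum _ _ _).symm
            rw [e1, pair_cost (fun i => bcoup (pf x i) (qf y i))
              (fun i => bcoup_total (pf x i) (qf y i))]
            congr 1
            exact Finset.sum_congr rfl fun i _ => bcoup_cost (pf x i) (qf y i)
    rw [hcost]
    have hbound : ∀ x y : State n, γ (x, y) * ∑ i, |pf x i - qf y i| ≤
        γ (x, y) * (C * hamming x y + L * ∑ i, |zc Nbr y i - mfQ Nbr P i|) := by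
      intro x y
      refine mul_le_mul_of_nonneg_left ?_ (hγ0 (x, y))
      have := pointwise_bound hG hL0 hLip hB hD hC hπ01 hP.1 x y
      calc ∑ i, |pf x i - qf y i|
          = ∑ i, |succProb Nbr f π x i - fext f i (chi (y i)) (π i) (mfQ Nbr P i)| := rfl
        _ ≤ _ := this
    calc ∑ x : State n, ∑ y : State n, γ (x, y) * ∑ i, |pf x i - qf y i|
        ≤ ∑ x : State n, ∑ y : State n, γ (x, y) *
            (C * hamming x y + L * ∑ i, |zc Nbr y i - mfQ Nbr P i|) :=
          Finset.sum_le_sum fun x _ => Finset.sum_le_sum fun y _ => hbound x y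
      _ = C * (∑ x : State n, ∑ y : State n, γ (x, y) * hamming x y) +
            L * ∑ x : State n, ∑ y : State n, γ (x, y) *
              ∑ i, |zc Nbr y i - mfQ Nbr P i| := by
          calc ∑ x : State n, ∑ y : State n, γ (x, y) *
                (C * hamming x y + L * ∑ i, |zc Nbr y i - mfQ Nbr P i|)
              = ∑ x : State n, (C * (∑ y : State n, γ (x, y) * hamming x y) +
                  L * ∑ y : State n, γ (x, y) * ∑ i, |zc Nbr y i - mfQ Nbr P i|) := by
                refine Finset.sum_congr rfl fun x _ => ?_
                rw [Finset.mul_sum, Finset.mul_sum, ← Finset.sum_add_distrib]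
                exact Finset.sum_congr rfl fun y _ => by ring
            _ = _ := by
                rw [Finset.sum_add_distrib, ← Finset.mul_sum, ← Finset.mul_sum]
      _ = C * (∑ p : State n × State n, γ p * hamming p.1 p.2) +
            L * ∑ i, ∑ y : State n, prodLaw P y * |zc Nbr y i - mfQ Nbr P i| := by
          congr 1
          · congr 1
            rw [Fintype.sum_prod_type]
          · congr 1
            calc ∑ x : State n, ∑ y : State n, γ (x, y) * ∑ i, |zc Nbr y i - mfQ Nbr P i|
                = ∑ y : State n, (∑ x : State n, γ (x, y)) *
                    ∑ i, |zc Nbr y i - mfQ Nbr P i| := by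
                  rw [Finset.sum_comm]
                  exact Finset.sum_congr rfl fun y _ => (Finset.sum_mul _ _ _).symm
              _ = ∑ y : State n, ∑ i, prodLaw P y * |zc Nbr y i - mfQ Nbr P i| := by
                  refine Finset.sum_congr rfl fun y _ => ?_
                  rw [hγ2 y, Finset.mul_sum]
              _ = ∑ i, ∑ y : State n, prodLaw P y * |zc Nbr y i - mfQ Nbr P i| :=
                  Finset.sum_comm

end MRT


end


open MRT in
/-- mean-field approximation in `L1`-Wasserstein distance: if `μ` is the
stationary distribution and `Y*` has independent Bernoulli(P*_i) coordinates, then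
`W_{L1}(μ, law(Y*)) ≤ n √L √C/(2(1−C))`. -/
theorem mean_field_WL1
    (n : ℕ) (Nbr : Fin n → Finset (Fin n)) (f : Fin n → Bool → Bool → ℝ → ℝ)
    (π : Fin n → ℝ) (L B C : ℝ) (D : ℕ)
    (hG : GoodGraph Nbr)
    (hf : PosF f)
    (hπ : ∀ i, π i ∈ Set.Ioo (0 : ℝ) 1)
    (hReg : Regular Nbr f L B D C)
    (μ : State n → ℝ) (hμ : IsStationary Nbr f π μ)
    (P : Fin n → ℝ) (hP : IsMFFixed Nbr f π P) :
    WL1 μ (prodLaw P) ≤ n * Real.sqrt L * Real.sqrt C / (2 * (1 - C)) := by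
  classical
  have hP1 : ∀ i, P i ∈ Set.Icc (0:ℝ) 1 := hP.1
  set S : Set ℝ := {c | ∃ γ, IsCoupling γ μ (prodLaw P) ∧
    c = ∑ p : State n × State n, γ p * hamming p.1 p.2} with hSdef
  have hWL1 : WL1 μ (prodLaw P) = sInf S := rfl
  have hS0 : ∀ c ∈ S, (0:ℝ) ≤ c := by
    rintro c ⟨γ, hγ, rfl⟩
    exact Finset.sum_nonneg fun p _ => mul_nonneg (hγ.1 p) (hamming_nonneg _ _)
  have hbdd : BddBelow S := ⟨0, fun c hc => hS0 c hc⟩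
  have hne : S.Nonempty := by
    refine ⟨_, ⟨fun p => μ p.1 * prodLaw P p.2, ⟨?_, ?_, ?_⟩, rfl⟩⟩
    · intro p
      exact mul_nonneg (hμ.1.1 p.1) (prodLaw_nonneg hP1 p.2)
    · intro x
      dsimp only
      rw [← Finset.mul_sum, sum_prodLaw, mul_one]
    · intro y
      dsimp only
      rw [← Finset.sum_mul, hμ.1.2, one_mul]
  rw [hWL1]
  by_cases hn : n = 0
  · subst hn
    obtain ⟨c, hc⟩ := hne
    have hc0 : c = 0 := by
      obtain ⟨γ, hγ, rfl⟩ := hc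
      refine Finset.sum_eq_zero fun p _ => ?_
      have : hamming p.1 p.2 = 0 := by simp [hamming]
      rw [this, mul_zero]
    rw [hc0] at hc
    have h0 : sInf S ≤ 0 := csInf_le hbdd hc
    simpa using h0
  · obtain ⟨i0⟩ : Nonempty (Fin n) := ⟨⟨0, Nat.pos_of_ne_zero hn⟩⟩
    obtain ⟨hL0, hLip, hB, hD, hC, hC1⟩ := id hReg
    have hB0 : (0:ℝ) ≤ B := (abs_nonneg _).trans (hB i0 true 0 le_rfl)
    have hC0 : (0:ℝ) ≤ C :=
      le_trans (add_nonneg hB0 (mul_nonneg hL0 (Nat.cast_nonneg D))) hC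
    have hLD : L * (D:ℝ) ≤ C := by linarith
    set K : ℝ := L * ∑ i, ∑ y : State n, prodLaw P y * |zc Nbr y i - mfQ Nbr P i| with hKdef
    have hstep : ∀ c ∈ S, ∃ c' ∈ S, c' ≤ C * c + K := by
      rintro c ⟨γ, hγ, rfl⟩
      obtain ⟨γ', hγ', hcost⟩ := coupling_step hG hf hπ hReg hμ hP γ hγ
      exact ⟨_, ⟨γ', hγ', rfl⟩, hcost⟩
    have hWK : sInf S ≤ C * sInf S + K := by
      have h1 : ∀ ε : ℝ, 0 < ε → sInf S ≤ C * sInf S + K + C * ε := by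
        intro ε hε
        obtain ⟨c, hcS, hclt⟩ := Real.lt_sInf_add_pos hne hε
        obtain ⟨c', hc'S, hle⟩ := hstep c hcS
        have h2 : sInf S ≤ c' := csInf_le hbdd hc'S
        have h3 : C * c ≤ C * (sInf S + ε) := mul_le_mul_of_nonneg_left hclt.le hC0
        nlinarith
      refine le_of_forall_pos_le_add ?_
      intro ε hε
      have hCp : (0:ℝ) < C + 1 := by linarith
      have h2 := h1 (ε / (C + 1)) (by positivity)
      have h4 : C * (ε / (C + 1)) ≤ ε := by
        calc C * (ε / (C + 1)) ≤ (C + 1) * (ε / (C + 1)) :=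
              mul_le_mul_of_nonneg_right (by linarith) (by positivity)
          _ = ε := by
              rw [mul_comm, div_mul_cancel₀ ε hCp.ne']
      linarith
    have h1C : (0:ℝ) < 1 - C := by linarith
    have hWle : sInf S ≤ K / (1 - C) := by
      rw [le_div_iff₀ h1C]
      nlinarith
    have hKb : K ≤ (n:ℝ) * Real.sqrt L * Real.sqrt C / 2 := by
      have hsum : ∑ i, ∑ y : State n, prodLaw P y * |zc Nbr y i - mfQ Nbr P i| ≤
          (n:ℝ) * (Real.sqrt D / 2) := by
        calc ∑ i, ∑ y : State n, prodLaw P y * |zc Nbr y i - mfQ Nbr P i|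
            ≤ ∑ _i : Fin n, Real.sqrt D / 2 :=
              Finset.sum_le_sum fun i _ => abs_dev_bound hP1 Nbr i (hD i)
          _ = (n:ℝ) * (Real.sqrt D / 2) := by
              rw [Finset.sum_const, Finset.card_univ, Fintype.card_fin, nsmul_eq_mul]
      have hLD2 : L * Real.sqrt D ≤ Real.sqrt L * Real.sqrt C := by
        have e1 : L * Real.sqrt D = Real.sqrt (L^2 * D) := by
          rw [Real.sqrt_mul (sq_nonneg L), Real.sqrt_sq hL0]
        have e2 : Real.sqrt L * Real.sqrt C = Real.sqrt (L * C) := (Real.sqrt_mul hL0 C).symm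
        rw [e1, e2]
        apply Real.sqrt_le_sqrt
        calc L^2 * (D:ℝ) = L * (L * D) := by ring
          _ ≤ L * C := mul_le_mul_of_nonneg_left hLD hL0
      calc K ≤ L * ((n:ℝ) * (Real.sqrt D / 2)) := mul_le_mul_of_nonneg_left hsum hL0
        _ = (n:ℝ) * (L * Real.sqrt D) / 2 := by ring
        _ ≤ (n:ℝ) * (Real.sqrt L * Real.sqrt C) / 2 := by
            have hn0 : (0:ℝ) ≤ (n:ℝ) := Nat.cast_nonneg n
            nlinarith
        _ = (n:ℝ) * Real.sqrt L * Real.sqrt C / 2 := by ring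
    have final : K / (1 - C) ≤ (n:ℝ) * Real.sqrt L * Real.sqrt C / (2 * (1 - C)) := by
      rw [show (n:ℝ) * Real.sqrt L * Real.sqrt C / (2 * (1 - C)) =
        ((n:ℝ) * Real.sqrt L * Real.sqrt C / 2) / (1 - C) by rw [div_div]]
      exact (div_le_div_iff_of_pos_right h1C).mpr hKb
    exact hWle.trans final
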